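/- arXiv:1101.0983 — 2 statements merged into one kernel-verified Lean document; each statement's English description precedes it below -/
import Mathlib

section
/- For all nonnegative integers ℓ, the Apéry polynomial satisfies A_ℓ(x) = ∑_{m=0}^{ℓ} C(2m,m) x^m ∑_{k=0}^{m} C(m,k)·C(m+k,k)·C(ℓ, m+k)·C(ℓ+m+k, m+k), where A_ℓ(x) = ∑_{k=0}^{ℓ} C(ℓ,k)^2 C(ℓ+k,k)^2 x^k. -/
open Finset


/-- Unconditional subset-of-subset identity. -/
lemma choose_mul' (n k s : ℕ) (hsk : s ≤ k) :
    n.choose k * k.choose s = n.choose s * (n - s).choose (k - s) := by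
  rcases le_or_gt k n with h | h
  · exact Nat.choose_mul hsk
  · rcases le_or_gt s n with hs | hs
    · rw [Nat.choose_eq_zero_of_lt h, Nat.choose_eq_zero_of_lt (by omega : n - s < k - s)]
      ring
    · rw [Nat.choose_eq_zero_of_lt (by omega : n < k), Nat.choose_eq_zero_of_lt hs]
      ring

/-- Vandermonde, range form. -/
lemma vand (a b c : ℕ) :
    (a + b).choose c = ∑ i ∈ range (c + 1), a.choose i * b.choose (c - i) := by
  rw [Nat.add_choose_eq, Finset.Nat.sum_antidiagonal_eq_sum_range_succ_mk]

lemma keyA (n m : ℕ) :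
    ∑ k ∈ range (m + 1), (2 * m).choose (m + k) * n.choose k * (n + 2 * m + k).choose k
      = (n + m).choose m * (n + 2 * m).choose m := by
  have step1 : ∀ k ∈ range (m + 1),
      (2 * m).choose (m + k) * n.choose k * (n + 2 * m + k).choose k
        = ∑ j ∈ range (m + 1),
            (2 * m).choose (m + k) * n.choose k * ((n + 2 * m).choose j * k.choose j) := by
    intro k hk
    simp only [mem_range] at hk
    calc (2 * m).choose (m + k) * n.choose k * (n + 2 * m + k).choose k
        = ∑ j ∈ range (k + 1),
            (2 * m).choose (m + k) * n.choose k * ((n + 2 * m).choose j * k.choose (k - j)) := by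
          rw [vand (n + 2 * m) k k, Finset.mul_sum]
      _ = ∑ j ∈ range (k + 1),
            (2 * m).choose (m + k) * n.choose k * ((n + 2 * m).choose j * k.choose j) := by
          refine Finset.sum_congr rfl fun j hj => ?_
          simp only [mem_range] at hj
          rw [Nat.choose_symm (by omega : j ≤ k)]
      _ = ∑ j ∈ range (m + 1),
            (2 * m).choose (m + k) * n.choose k * ((n + 2 * m).choose j * k.choose j) := by
          refine Finset.sum_subset (Finset.range_subset_range.2 (by omega)) fun j _ hj' => ?_
          simp only [mem_range, not_lt] at hj'
          rw [Nat.choose_eq_zero_of_lt (by omega : k < j)]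
          ring
  rw [Finset.sum_congr rfl step1, Finset.sum_comm]
  have step2 : ∀ j ∈ range (m + 1),
      (∑ k ∈ range (m + 1),
          (2 * m).choose (m + k) * n.choose k * ((n + 2 * m).choose j * k.choose j))
        = (n + 2 * m).choose j * n.choose j * (n - j + 2 * m).choose (m - j) := by
    intro j hj
    simp only [mem_range] at hj
    have hjm : j ≤ m := by omega
    calc (∑ k ∈ range (m + 1),
            (2 * m).choose (m + k) * n.choose k * ((n + 2 * m).choose j * k.choose j))
        = ∑ k ∈ Ico j (m + 1),
            (2 * m).choose (m + k) * n.choose k * ((n + 2 * m).choose j * k.choose j) := by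
          rw [range_eq_Ico, ← Finset.sum_Ico_consecutive _ (Nat.zero_le j) (by omega : j ≤ m + 1)]
          rw [Finset.sum_eq_zero fun k hk => by
            simp only [Finset.mem_Ico] at hk
            rw [Nat.choose_eq_zero_of_lt (by omega : k < j)]; ring]
          rw [zero_add]
      _ = ∑ i ∈ range (m - j + 1),
            (2 * m).choose (m + (j + i)) * n.choose (j + i)
              * ((n + 2 * m).choose j * (j + i).choose j) := by
          rw [Finset.sum_Ico_eq_sum_range, show m + 1 - j = m - j + 1 from by omega]
      _ = ∑ i ∈ range (m - j + 1),
            (n + 2 * m).choose j * n.choose j * (n - j).choose i * (2 * m).choose (m - j - i) := by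
          refine Finset.sum_congr rfl fun i hi => ?_
          simp only [mem_range] at hi
          have h1 : n.choose (j + i) * (j + i).choose j
              = n.choose j * (n - j).choose i := by
            rw [choose_mul' n (j + i) j (by omega)]
            congr 1
            · congr 1
              omega
          have h2 : (2 * m).choose (m + (j + i)) = (2 * m).choose (m - j - i) := by
            rcases le_or_gt (m + (j + i)) (2 * m) with h | h
            · rw [← Nat.choose_symm h]
              congr 1
              omega
            · rw [Nat.choose_eq_zero_of_lt h, Nat.choose_eq_zero_of_lt (by omega : 2 * m < m - j - i)]
          calc (2 * m).choose (m + (j + i)) * n.choose (j + i)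
                * ((n + 2 * m).choose j * (j + i).choose j)
              = (n + 2 * m).choose j * (n.choose (j + i) * (j + i).choose j)
                  * (2 * m).choose (m + (j + i)) := by ring
            _ = (n + 2 * m).choose j * n.choose j * (n - j).choose i
                  * (2 * m).choose (m - j - i) := by rw [h1, h2]; ring
      _ = (n + 2 * m).choose j * n.choose j * (n - j + 2 * m).choose (m - j) := by
          rw [vand (n - j) (2 * m) (m - j), Finset.mul_sum]
          refine Finset.sum_congr rfl fun i hi => ?_
          have : m - j - i = m - j - i := rfl
          ring
  rw [Finset.sum_congr rfl step2]
  have step3 : ∀ j ∈ range (m + 1),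
      (n + 2 * m).choose j * n.choose j * (n - j + 2 * m).choose (m - j)
        = (n + 2 * m).choose m * (n.choose j * m.choose (m - j)) := by
    intro j hj
    simp only [mem_range] at hj
    have hjm : j ≤ m := by omega
    rcases le_or_gt j n with hn | hn
    · have e : n - j + 2 * m = n + 2 * m - j := by omega
      have h := Nat.choose_mul (n := n + 2 * m) hjm
      rw [e, mul_right_comm, ← h, Nat.choose_symm hjm]
      ring
    · rw [Nat.choose_eq_zero_of_lt hn]
      ring
  rw [Finset.sum_congr rfl step3, ← Finset.mul_sum, ← vand n m m, mul_comm]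

lemma coeff_eq (ℓ m : ℕ) (hm : m ≤ ℓ) :
    (2 * m).choose m * ∑ k ∈ range (m + 1),
        m.choose k * (m + k).choose k * ℓ.choose (m + k) * (ℓ + m + k).choose (m + k)
      = ℓ.choose m ^ 2 * (ℓ + m).choose m ^ 2 := by
  rw [Finset.mul_sum]
  have hterm : ∀ k ∈ range (m + 1),
      (2 * m).choose m *
          (m.choose k * (m + k).choose k * ℓ.choose (m + k) * (ℓ + m + k).choose (m + k))
        = ℓ.choose m * (ℓ + m).choose m *
            ((2 * m).choose (m + k) * (ℓ - m).choose k * (ℓ + m + k).choose k) := by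
    intro k _
    have hsymm : (m + k).choose m = (m + k).choose k := by
      rw [← Nat.choose_symm (Nat.le_add_left k m)]
      congr 1
      omega
    have hc : (2 * m).choose (m + k) * (m + k).choose k = (2 * m).choose m * m.choose k := by
      have h := choose_mul' (2 * m) (m + k) m (Nat.le_add_right m k)
      rw [show 2 * m - m = m from by omega, show m + k - m = k from by omega] at h
      rw [← hsymm, h]
    have ha : ℓ.choose (m + k) * (m + k).choose k = ℓ.choose m * (ℓ - m).choose k := by
      have h := choose_mul' ℓ (m + k) m (Nat.le_add_right m k)
      rw [show m + k - m = k from by omega] at h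
      rw [← hsymm, h]
    have hb : (ℓ + m + k).choose (m + k) * (m + k).choose k
        = (ℓ + m + k).choose k * (ℓ + m).choose m := by
      have h := choose_mul' (ℓ + m + k) (m + k) k (Nat.le_add_left k m)
      rw [show ℓ + m + k - k = ℓ + m from by omega, show m + k - k = m from by omega] at h
      exact h
    calc (2 * m).choose m *
            (m.choose k * (m + k).choose k * ℓ.choose (m + k) * (ℓ + m + k).choose (m + k))
        = ((2 * m).choose m * m.choose k) * (ℓ.choose (m + k) * (m + k).choose k)
            * (ℓ + m + k).choose (m + k) := by ring
      _ = ((2 * m).choose (m + k) * (m + k).choose k) * (ℓ.choose m * (ℓ - m).choose k)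
            * (ℓ + m + k).choose (m + k) := by rw [← hc, ha]
      _ = ((ℓ + m + k).choose (m + k) * (m + k).choose k) * (2 * m).choose (m + k)
            * (ℓ.choose m * (ℓ - m).choose k) := by ring
      _ = ((ℓ + m + k).choose k * (ℓ + m).choose m) * (2 * m).choose (m + k)
            * (ℓ.choose m * (ℓ - m).choose k) := by rw [hb]
      _ = ℓ.choose m * (ℓ + m).choose m *
            ((2 * m).choose (m + k) * (ℓ - m).choose k * (ℓ + m + k).choose k) := by ring
  rw [Finset.sum_congr rfl hterm, ← Finset.mul_sum]
  have h := keyA (ℓ - m) m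
  rw [show ℓ - m + 2 * m = ℓ + m from by omega, show ℓ - m + m = ℓ from by omega] at h
  have hsum : ∑ k ∈ range (m + 1),
      (2 * m).choose (m + k) * (ℓ - m).choose k * (ℓ + m + k).choose k
        = ℓ.choose m * (ℓ + m).choose m := by
    rw [← h]
  rw [hsum]
  ring

theorem apery_polynomial_expansion (ℓ : ℕ) (x : ℤ) :
    ∑ k ∈ range (ℓ + 1),
        (ℓ.choose k : ℤ) ^ 2 * ((ℓ + k).choose k : ℤ) ^ 2 * x ^ k =
      ∑ m ∈ range (ℓ + 1), ((2 * m).choose m : ℤ) * x ^ m *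
        ∑ k ∈ range (m + 1),
          (m.choose k : ℤ) * ((m + k).choose k : ℤ) * (ℓ.choose (m + k) : ℤ) *
            ((ℓ + m + k).choose (m + k) : ℤ) := by
  refine Finset.sum_congr rfl fun m hm => ?_
  simp only [mem_range] at hm
  have h := coeff_eq ℓ m (by omega)
  calc (ℓ.choose m : ℤ) ^ 2 * ((ℓ + m).choose m : ℤ) ^ 2 * x ^ m
      = ((ℓ.choose m ^ 2 * (ℓ + m).choose m ^ 2 : ℕ) : ℤ) * x ^ m := by push_cast; ring
    _ = (((2 * m).choose m * ∑ k ∈ range (m + 1),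
          m.choose k * (m + k).choose k * ℓ.choose (m + k) * (ℓ + m + k).choose (m + k)
            : ℕ) : ℤ) * x ^ m := by rw [h]
    _ = ((2 * m).choose m : ℤ) * x ^ m *
        ∑ k ∈ range (m + 1),
          (m.choose k : ℤ) * ((m + k).choose k : ℤ) * (ℓ.choose (m + k) : ℤ) *
            ((ℓ + m + k).choose (m + k) : ℤ) := by push_cast; ring
end

section
/- For every nonnegative integer m, ∑_{k=0}^{m} C(m,k) C(m+k,k) (-1)^{m-k} / (2m+2k+1) = (2m)!^3 / ((4m+1)! · (m!)^2). -/
open Finset Polynomial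

lemma L1 (k : ℕ) : ∀ m : ℕ, (k.factorial : ℚ) * ∏ j ∈ range m, ((k:ℚ) + j + 1) = ((m+k).factorial : ℚ) := by
  intro m
  induction m with
  | zero => simp
  | succ m ih =>
    rw [Finset.prod_range_succ, ← mul_assoc, ih]
    have : m + 1 + k = (m + k) + 1 := by ring
    rw [this, Nat.factorial_succ]
    push_cast; ring

lemma L2 : ∀ k : ℕ, ∏ j ∈ range k, ((j:ℚ) - k) = (-1)^k * k.factorial := by
  intro k
  induction k with
  | zero => simp
  | succ k ih =>
    rw [Finset.prod_range_succ']
    have : ∀ j ∈ range k, ((j+1:ℕ):ℚ) - ((k+1:ℕ):ℚ) = (j:ℚ) - k := by intro j _; push_cast; ring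
    rw [Finset.prod_congr rfl this, ih]
    rw [Nat.factorial_succ]
    push_cast; ring

lemma L3 (k m : ℕ) (h : k ≤ m) : ∏ j ∈ Finset.Ico (k+1) (m+1), ((j:ℚ) - k) = ((m-k).factorial : ℚ) := by
  rw [Finset.prod_Ico_eq_prod_range]
  have h2 : m + 1 - (k+1) = m - k := by omega
  rw [h2]
  induction (m - k) with
  | zero => simp
  | succ n ih =>
    rw [Finset.prod_range_succ, ih, Nat.factorial_succ]
    push_cast; ring

lemma erase_split (k m : ℕ) (hk : k ≤ m) :
    ((range (m+1)).erase k) = range k ∪ Finset.Ico (k+1) (m+1) := by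
  ext j
  simp only [Finset.mem_erase, Finset.mem_range, Finset.mem_union, Finset.mem_Ico]
  omega

lemma erase_prod (k m : ℕ) (hk : k ≤ m) :
    ∏ j ∈ ((range (m+1)).erase k), ((j:ℚ) - k) = (-1)^k * k.factorial * (m-k).factorial := by
  rw [erase_split k m hk, Finset.prod_union, L2, L3 k m hk]
  rw [Finset.disjoint_left]; intro a ha hb
  simp only [Finset.mem_range] at ha
  simp only [Finset.mem_Ico] at hb
  omega

-- polynomial identity
lemma poly_id (m : ℕ) :
    (∏ j ∈ range m, (X - C ((j:ℚ)+1))) =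
    ∑ k ∈ range (m+1), C ((m.choose k : ℚ) * ((m+k).choose k : ℚ) * (-1)^(m-k)) *
        ∏ j ∈ (range (m+1)).erase k, (X + C (j:ℚ)) := by
  apply Polynomial.eq_of_degrees_lt_of_eval_index_eq (v := fun i : ℕ => -(i:ℚ)) (range (m+1))
  · intro a ha b hb hab
    simpa using hab
  · rw [Finset.card_range]
    apply lt_of_le_of_lt (Polynomial.degree_prod_le _ _)
    simp only [Polynomial.degree_X_sub_C, Finset.sum_const, Finset.card_range, nsmul_eq_mul,
      mul_one]
    exact_mod_cast Nat.lt_succ_self m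
  · rw [Finset.card_range]
    apply (Polynomial.degree_sum_le _ _).trans_lt
    rw [Finset.sup_lt_iff (by exact_mod_cast WithBot.bot_lt_coe (m+1))]
    intro k hk
    calc (C ((m.choose k : ℚ) * ((m+k).choose k : ℚ) * (-1)^(m-k)) *
        ∏ j ∈ (range (m+1)).erase k, (X + C (j:ℚ))).degree
        ≤ 0 + (∏ j ∈ (range (m+1)).erase k, (X + C (j:ℚ))).degree :=
          (Polynomial.degree_mul_le _ _).trans (add_le_add Polynomial.degree_C_le le_rfl)
      _ ≤ 0 + ∑ j ∈ (range (m+1)).erase k, (1 : WithBot ℕ) := by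
          apply add_le_add_right
          apply (Polynomial.degree_prod_le _ _).trans
          apply Finset.sum_le_sum
          intro j _
          exact le_of_eq (Polynomial.degree_X_add_C _)
      _ < (m+1 : ℕ) := by
          rw [Finset.sum_const, Finset.card_erase_of_mem hk, Finset.card_range]
          simp only [zero_add, nsmul_eq_mul, mul_one]
          exact_mod_cast Nat.lt_succ_self m
  · intro k hk
    rw [Finset.mem_range] at hk
    have hkm : k ≤ m := by omega
    rw [Polynomial.eval_prod, Polynomial.eval_finset_sum]
    rw [Finset.sum_eq_single k]
    · simp only [Polynomial.eval_mul, Polynomial.eval_C, Polynomial.eval_prod,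
        Polynomial.eval_add, Polynomial.eval_X]
      have hrhs : ∏ j ∈ (range (m+1)).erase k, (-(k:ℚ) + j) =
          (-1)^k * k.factorial * (m-k).factorial := by
        rw [← erase_prod k m hkm]
        apply Finset.prod_congr rfl
        intro j _; ring
      rw [hrhs]
      have hlhs : ∏ j ∈ range m, Polynomial.eval (-(k:ℚ)) (X - C ((j:ℚ)+1)) =
          (-1)^m * ((m+k).factorial / k.factorial) := by
        have : ∀ j ∈ range m, Polynomial.eval (-(k:ℚ)) (X - C ((j:ℚ)+1)) =
            (-1) * ((k:ℚ) + j + 1) := by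
          intro j _; simp; ring
        rw [Finset.prod_congr rfl this, Finset.prod_mul_distrib, Finset.prod_const,
          Finset.card_range]
        have hk0 : (k.factorial : ℚ) ≠ 0 := by exact_mod_cast k.factorial_ne_zero
        congr 1
        rw [eq_div_iff hk0, mul_comm]
        exact L1 k m
      rw [hlhs]
      have e1 : ((m.choose k : ℚ)) = m.factorial / (k.factorial * (m-k).factorial) :=
        Nat.cast_choose ℚ hkm
      have e2 : (((m+k).choose k : ℚ)) = (m+k).factorial / (k.factorial * m.factorial) := by
        have h7 : (m+k) - k = m := by omega
        rw [Nat.cast_choose ℚ (by omega : k ≤ m + k), h7]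
      have h4 : (-1:ℚ)^(m-k) = (-1)^m * (-1)^k := by
        have h6 : (-1:ℚ)^(k+k) = 1 := by
          rw [show k+k = 2*k by ring, pow_mul]; norm_num
        calc (-1:ℚ)^(m-k) = (-1:ℚ)^(m-k) * ((-1)^k * (-1)^k) := by
              rw [← pow_add, h6, mul_one]
          _ = (-1)^m * (-1)^k := by
              rw [← mul_assoc, ← pow_add, show m - k + k = m by omega]
      rw [e1, e2, h4]
      have hk0 : (k.factorial : ℚ) ≠ 0 := by exact_mod_cast k.factorial_ne_zero
      have hm0 : (m.factorial : ℚ) ≠ 0 := by exact_mod_cast m.factorial_ne_zero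
      have hmk0 : ((m-k).factorial : ℚ) ≠ 0 := by exact_mod_cast (m-k).factorial_ne_zero
      have h8 : ((-1:ℚ))^k * (-1)^k = 1 := by
        rw [← pow_add, show k+k=2*k by ring, pow_mul]; norm_num
      field_simp
      linear_combination (-1 : ℚ) * h8
    · intro b hb hbk
      rw [Polynomial.eval_mul]
      apply mul_eq_zero_of_right
      rw [Polynomial.eval_prod]
      apply Finset.prod_eq_zero (i := k)
      · exact Finset.mem_erase.mpr ⟨Ne.symm hbk, Finset.mem_range.mpr hk⟩
      · simp
    · intro h; exact absurd (Finset.mem_range.mpr hk) h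

lemma Pd_eq (n : ℕ) : ∏ i ∈ range n, ((i:ℚ) + 1/2) = ((2*n).factorial : ℚ) / (4^n * n.factorial) := by
  induction n with
  | zero => simp
  | succ n ih =>
    rw [Finset.prod_range_succ, ih]
    have h1 : 2*(n+1) = (2*n+1) + 1 := by ring
    rw [h1, Nat.factorial_succ, Nat.factorial_succ, Nat.factorial_succ]
    have h4 : (4:ℚ)^n ≠ 0 := by positivity
    have hf : ((n.factorial : ℚ)) ≠ 0 := by exact_mod_cast n.factorial_ne_zero
    push_cast
    field_simp
    ring

lemma Dlem : ∀ m : ℕ, ∏ j ∈ range m, (((m:ℕ):ℚ) + 1/2 - ((j:ℚ)+1)) =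
    ((2*m).factorial : ℚ) / (4^m * m.factorial) := by
  intro m
  induction m with
  | zero => simp
  | succ m ih =>
    rw [Finset.prod_range_succ']
    have hc : ∀ j ∈ range m, (((m+1:ℕ):ℚ) + 1/2 - (((j+1:ℕ):ℚ)+1)) =
        (((m:ℕ):ℚ) + 1/2 - ((j:ℚ)+1)) := by intro j _; push_cast; ring
    rw [Finset.prod_congr rfl hc, ih]
    have h1 : 2*(m+1) = (2*m+1) + 1 := by ring
    rw [h1, Nat.factorial_succ, Nat.factorial_succ, Nat.factorial_succ]
    have h4 : (4:ℚ)^m ≠ 0 := by positivity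
    have hf : ((m.factorial : ℚ)) ≠ 0 := by exact_mod_cast m.factorial_ne_zero
    push_cast
    field_simp
    ring

lemma Elem (m : ℕ) : ∏ j ∈ range (m+1), (((m:ℕ):ℚ) + 1/2 + (j:ℚ)) =
    (((4*m+2).factorial : ℚ) / (4^(2*m+1) * (2*m+1).factorial)) /
      (((2*m).factorial : ℚ) / (4^m * m.factorial)) := by
  have key : (∏ i ∈ range m, ((i:ℚ) + 1/2)) * ∏ j ∈ range (m+1), (((m:ℕ):ℚ) + 1/2 + (j:ℚ)) =
      ∏ i ∈ range (2*m+1), ((i:ℚ) + 1/2) := by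
    have h : 2*m+1 = m + (m+1) := by ring
    rw [h, Finset.prod_range_add (fun i => ((i:ℚ)+1/2)) m (m+1)]
    congr 1
    apply Finset.prod_congr rfl
    intro j _; push_cast; ring
  have h2 : (∏ i ∈ range m, ((i:ℚ) + 1/2)) ≠ 0 := by
    apply Finset.prod_ne_zero_iff.mpr; intro i _; positivity
  have hb : ∏ j ∈ range (m+1), (((m:ℕ):ℚ) + 1/2 + (j:ℚ)) =
      (∏ i ∈ range (2*m+1), ((i:ℚ) + 1/2)) / (∏ i ∈ range m, ((i:ℚ) + 1/2)) := by
    rw [eq_div_iff h2, mul_comm]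
    exact key
  rw [hb, Pd_eq, Pd_eq, show 2*(2*m+1) = 4*m+2 from by ring]


theorem mortenson_identity (m : ℕ) :
    ∑ k ∈ range (m + 1),
        (m.choose k : ℚ) * ((m + k).choose k : ℚ) * (-1 : ℚ) ^ (m - k) /
          (2 * m + 2 * k + 1) =
      ((2 * m).factorial : ℚ) ^ 3 /
        (((4 * m + 1).factorial : ℚ) * (m.factorial : ℚ) ^ 2) := by
  have hpoly := congrArg (Polynomial.eval ((m:ℚ) + 1/2)) (poly_id m)
  simp only [Polynomial.eval_prod, Polynomial.eval_finset_sum, Polynomial.eval_mul,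
    Polynomial.eval_sub, Polynomial.eval_add, Polynomial.eval_X, Polynomial.eval_C] at hpoly
  have hE : ∀ (s : Finset ℕ), (∏ j ∈ s, ((m:ℚ) + 1/2 + (j:ℚ))) ≠ 0 := by
    intro s
    apply Finset.prod_ne_zero_iff.mpr; intro i _; positivity
  have step : ∑ k ∈ range (m + 1),
        (m.choose k : ℚ) * ((m + k).choose k : ℚ) * (-1 : ℚ) ^ (m - k) /
          (2 * m + 2 * k + 1) =
      (∑ k ∈ range (m+1), (m.choose k : ℚ) * ((m + k).choose k : ℚ) * (-1 : ℚ) ^ (m - k) *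
          ∏ j ∈ (range (m+1)).erase k, ((m:ℚ) + 1/2 + (j:ℚ))) /
        (2 * ∏ j ∈ range (m+1), ((m:ℚ) + 1/2 + (j:ℚ))) := by
    rw [Finset.sum_div]
    apply Finset.sum_congr rfl
    intro k hk
    have hfull : ((m:ℚ) + 1/2 + (k:ℚ)) * ∏ j ∈ (range (m+1)).erase k, ((m:ℚ) + 1/2 + (j:ℚ)) =
        ∏ j ∈ range (m+1), ((m:ℚ) + 1/2 + (j:ℚ)) :=
      Finset.mul_prod_erase _ (fun j : ℕ => ((m:ℚ) + 1/2 + (j:ℚ))) hk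
    have h2k : (2 * (m:ℚ) + 2 * (k:ℚ) + 1) = 2 * ((m:ℚ) + 1/2 + (k:ℚ)) := by ring
    rw [h2k, ← hfull]
    have hxk : ((m:ℚ) + 1/2 + (k:ℚ)) ≠ 0 := by positivity
    have hpe := hE ((range (m+1)).erase k)
    field_simp
  rw [step, ← hpoly, Dlem m, Elem m]
  have hf1 : ((4*m+2).factorial : ℚ) = (4*m+2) * (4*m+1).factorial := by
    rw [show 4*m+2 = (4*m+1)+1 from rfl, Nat.factorial_succ]; push_cast; ring
  have hf2 : ((2*m+1).factorial : ℚ) = (2*m+1) * (2*m).factorial := by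
    rw [Nat.factorial_succ]; push_cast; ring
  rw [hf1, hf2]
  have h1 : ((2*m).factorial : ℚ) ≠ 0 := by exact_mod_cast (2*m).factorial_ne_zero
  have h2 : ((4*m+1).factorial : ℚ) ≠ 0 := by exact_mod_cast (4*m+1).factorial_ne_zero
  have h3 : (m.factorial : ℚ) ≠ 0 := by exact_mod_cast m.factorial_ne_zero
  have h4 : (4:ℚ)^m ≠ 0 := by positivity
  have h5 : (4:ℚ)^(2*m+1) ≠ 0 := by positivity
  have h6 : ((4:ℚ)*m+2) ≠ 0 := by positivity
  have h7 : ((2:ℚ)*m+1) ≠ 0 := by positivity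
  field_simp
  ring
end
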